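/- Let L = { (A_b) ∈ C(0) : every component A_b is strictly lower triangular }. Then L is an abelian Lie ideal of C(0), i.e. [L, L] = 0 and [C(0), L] ⊆ L, of dimension n(n−1)/2; moreover L equals the kernel of the restriction to C(0) of the projection onto the component b = 0. -/

import Mathlib

/-- The diagonal matrix `D_b(0)` over `ℂ` whose `(b+1,b+1)` entry (1-based), i.e. `(b,b)`
entry (0-based), is `0` and whose other diagonal entries are `1`. -/
def Dmat0 (n : ℕ) (b : Fin n) : Matrix (Fin n) (Fin n) ℂ :=
  Matrix.diagonal (fun i => if i = b then 0 else 1)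

/-- `C(0)`: tuples `(A_b)_{b ∈ ℤ/nℤ}` of complex `n×n` matrices with
`A_{b+1} D_b(0) = D_b(0) A_b` for all `b`. -/
def Cset0 (n : ℕ) [NeZero n] : Set (Fin n → Matrix (Fin n) (Fin n) ℂ) :=
  {A | ∀ b : Fin n, A (b + 1) * Dmat0 n b = Dmat0 n b * A b}

/-- `L`: tuples in `C(0)` all of whose components are strictly lower triangular
(entries `(i,j)` with `i ≤ j` vanish). -/
def Lset (n : ℕ) [NeZero n] : Set (Fin n → Matrix (Fin n) (Fin n) ℂ) :=
  {A | A ∈ Cset0 n ∧ ∀ (b : Fin n) (i j : Fin n), i ≤ j → A b i j = 0}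

set_option linter.unusedSectionVars false
open Fin.NatCast

section Helpers
variable {n : ℕ} [NeZero n] {A : Fin n → Matrix (Fin n) (Fin n) ℂ}

lemma entry_eq (hA : A ∈ Cset0 n) (b i j : Fin n) :
    A (b+1) i j * (if j = b then 0 else 1) = (if i = b then 0 else 1) * A b i j := by
  have := congrFun (congrFun (hA b) i) j
  simpa [Dmat0, Matrix.mul_diagonal, Matrix.diagonal_mul] using this

lemma e1 (hA : A ∈ Cset0 n) (b i : Fin n) (h : i ≠ b) : A b i b = 0 := by
  have := entry_eq hA b i b; simp [h] at this; exact this.symm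

lemma e2 (hA : A ∈ Cset0 n) (b j : Fin n) (h : j ≠ b) : A (b+1) b j = 0 := by
  have := entry_eq hA b b j; simpa [h] using this

lemma e3 (hA : A ∈ Cset0 n) (b i j : Fin n) (hi : i ≠ b) (hj : j ≠ b) :
    A (b+1) i j = A b i j := by
  have := entry_eq hA b i j; simpa [hi, hj] using this

lemma val_add_nat (b : Fin n) (k : ℕ) : ((b + (k : Fin n)) : Fin n).val = (b.val + k) % n := by
  rw [Fin.add_def, Fin.val_natCast]
  conv_rhs => rw [Nat.add_mod, Nat.mod_eq_of_lt b.isLt]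

lemma const (hA : A ∈ Cset0 n) (i j : Fin n) :
    ∀ (k : ℕ) (b : Fin n), (∀ m : ℕ, m < k → (b + (m : Fin n)) ≠ i ∧ (b + (m : Fin n)) ≠ j)
      → A (b + (k : Fin n)) i j = A b i j := by
  intro k
  induction k with
  | zero => simp
  | succ k ih =>
    intro b hb
    have h1 : ((k+1 : ℕ) : Fin n) = (k : Fin n) + 1 := by push_cast; ring
    have hk := hb k (Nat.lt_succ_self k)
    rw [h1, ← add_assoc, e3 hA _ i j hk.1.symm hk.2.symm]
    · exact ih b (fun m hm => hb m (Nat.lt_succ_of_lt hm))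

lemma const' (hA : A ∈ Cset0 n) (i j b c : Fin n) (k : ℕ)
    (hk : (b.val + k) % n = c.val)
    (h : ∀ m, m < k → (b.val + m) % n ≠ i.val ∧ (b.val + m) % n ≠ j.val) :
    A c i j = A b i j := by
  have hc : (b + (k : Fin n) : Fin n) = c := Fin.ext (by rw [val_add_nat]; exact hk)
  rw [← hc]
  refine const hA i j k b (fun m hm => ⟨fun hcon => (h m hm).1 ?_, fun hcon => (h m hm).2 ?_⟩)
  · rw [← val_add_nat, hcon]
  · rw [← val_add_nat, hcon]

lemma hmod {x : ℕ} (hx : x < 2*n) : x % n = if x < n then x else x - n := by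
  rcases Nat.lt_or_ge x n with h|h
  · simp [Nat.mod_eq_of_lt h, h]
  · rw [if_neg (by omega), Nat.mod_eq_sub_mod h, Nat.mod_eq_of_lt (by omega)]

lemma arcZero (hA : A ∈ Cset0 n) {i j b : Fin n} (hij : i ≠ j)
    (hb : (i.val < b.val ∧ b.val ≤ j.val) ∨
          (j.val < i.val ∧ (b.val ≤ j.val ∨ i.val < b.val))) :
    A b i j = 0 := by
  have hin := i.isLt; have hjn := j.isLt; have hbn := b.isLt
  have anchor : A (i + 1) i j = 0 := e2 hA i j hij.symm
  have base : (i + 1 : Fin n).val = (i.val + 1) % n := by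
    rw [show (i+1:Fin n) = i + ((1:ℕ):Fin n) by norm_num, val_add_nat]
  obtain ⟨k, hk1, hk2⟩ : ∃ k : ℕ, (i.val + 1 + k) % n = b.val ∧
      ∀ m, m < k → (i.val + 1 + m) % n ≠ i.val ∧ (i.val + 1 + m) % n ≠ j.val := by
    rcases hb with ⟨h1, h2⟩ | ⟨h1, h2 | h2⟩
    · refine ⟨b.val - i.val - 1, ?_, fun m hm => ?_⟩
      · rw [Nat.mod_eq_of_lt (by omega)]; omega
      · rw [hmod (by omega)]; constructor <;> (split_ifs <;> omega)
    · refine ⟨b.val + n - i.val - 1, ?_, fun m hm => ?_⟩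
      · rw [hmod (by omega)]; split_ifs <;> omega
      · rw [hmod (by omega)]; constructor <;> (split_ifs <;> omega)
    · refine ⟨b.val - i.val - 1, ?_, fun m hm => ?_⟩
      · rw [Nat.mod_eq_of_lt (by omega)]; omega
      · rw [hmod (by omega)]; constructor <;> (split_ifs <;> omega)
  rw [← anchor]
  refine const' hA i j (i+1) b k ?_ (fun m hm => ?_)
  · rw [base, Nat.mod_add_mod]; exact hk1
  · rw [base, Nat.mod_add_mod]; exact hk2 m hm

lemma Lzero {A : Fin n → Matrix (Fin n) (Fin n) ℂ} (hL : A ∈ Lset n) (b i j : Fin n)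
    (h : ¬ (j.val < b.val ∧ b.val ≤ i.val)) : A b i j = 0 := by
  by_cases hij : i ≤ j
  · exact hL.2 b i j hij
  · have hij' : j.val < i.val := by rw [Fin.le_def] at hij; omega
    exact arcZero hL.1 (Fin.ne_of_val_ne (by omega)) (Or.inr ⟨hij', by omega⟩)

end Helpers

/-- The canonical element of `L` with prescribed lower-triangular data. -/
def buildL (n : ℕ) [NeZero n] (x : Fin n → Fin n → ℂ) : Fin n → Matrix (Fin n) (Fin n) ℂ :=
  fun b => Matrix.of fun i j => if j.val < b.val ∧ b.val ≤ i.val then x i j else 0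

section B
variable {n : ℕ} [NeZero n]

lemma buildL_mem (x : Fin n → Fin n → ℂ) : buildL n x ∈ Lset n := by
  constructor
  · intro b
    ext i j
    have hb1 : ((b+1 : Fin n)).val = (b.val + 1) % n := by
      rw [show (b+1:Fin n) = b + ((1:ℕ):Fin n) by norm_num, val_add_nat]
    have hin := i.isLt; have hjn := j.isLt; have hbn := b.isLt
    simp only [Matrix.mul_diagonal, Matrix.diagonal_mul, Dmat0, buildL, Matrix.of_apply, hb1,
      Fin.ext_iff]
    rcases Nat.lt_or_ge (b.val+1) n with h|h
    · rw [Nat.mod_eq_of_lt h]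
      split_ifs <;> simp_all <;> omega
    · rw [Nat.mod_eq_sub_mod h, Nat.mod_eq_of_lt (by omega)]
      split_ifs <;> simp_all <;> omega
  · intro b i j hij
    rw [Fin.le_def] at hij
    exact if_neg (by omega)

/-- `L` as a ℂ-submodule. -/
noncomputable def Lsub (n : ℕ) [NeZero n] : Submodule ℂ (Fin n → Matrix (Fin n) (Fin n) ℂ) where
  carrier := Lset n
  zero_mem' := by
    refine ⟨fun b => by simp, fun b i j _ => rfl⟩
  add_mem' := by
    rintro A B ⟨hA1, hA2⟩ ⟨hB1, hB2⟩
    refine ⟨fun b => ?_, fun b i j h => ?_⟩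
    · simp only [Pi.add_apply, add_mul, mul_add, hA1 b, hB1 b]
    · simp [hA2 b i j h, hB2 b i j h]
  smul_mem' := by
    rintro c A ⟨hA1, hA2⟩
    refine ⟨fun b => ?_, fun b i j h => ?_⟩
    · simp only [Pi.smul_apply, smul_mul_assoc, mul_smul_comm, hA1 b]
    · simp [hA2 b i j h]

/-- The parametrization of `L` by strictly-lower-triangular data. -/
noncomputable def lowEquiv (n : ℕ) [NeZero n] :
    (Lsub n) ≃ₗ[ℂ] ({p : Fin n × Fin n // p.2 < p.1} → ℂ) where
  toFun A p := (A : Fin n → Matrix (Fin n) (Fin n) ℂ) p.1.1 p.1.1 p.1.2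
  map_add' A B := rfl
  map_smul' c A := rfl
  invFun x := ⟨buildL n (fun i j => if h : j < i then x ⟨(i,j), h⟩ else 0), buildL_mem _⟩
  left_inv A := by
    apply Subtype.ext
    funext b
    ext i j
    have hin := i.isLt; have hjn := j.isLt; have hbn := b.isLt
    show (if j.val < b.val ∧ b.val ≤ i.val then
        (if h : j < i then (A : Fin n → Matrix (Fin n) (Fin n) ℂ) i i j else 0) else 0)
        = (A : Fin n → Matrix (Fin n) (Fin n) ℂ) b i j
    by_cases hcond : j.val < b.val ∧ b.val ≤ i.val
    · rw [if_pos hcond, dif_pos (show j < i by rw [Fin.lt_def]; omega)]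
      exact const' A.2.1 i j b i (i.val - b.val)
        (by rw [Nat.mod_eq_of_lt (by omega)]; omega)
        (fun m hm => by rw [Nat.mod_eq_of_lt (by omega)]; omega)
    · rw [if_neg hcond]
      exact (Lzero A.2 b i j hcond).symm
  right_inv x := by
    funext p
    obtain ⟨⟨a, c⟩, h⟩ := p
    show (if c.val < a.val ∧ a.val ≤ a.val then
        (if h : c < a then x ⟨(a,c), h⟩ else 0) else 0) = x ⟨(a,c), h⟩
    rw [if_pos ⟨h, le_refl _⟩, dif_pos h]

lemma card_low : Fintype.card {p : Fin n × Fin n // p.2 < p.1} = n*(n-1)/2 := by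
  have e : {p : Fin n × Fin n // p.2 < p.1} ≃ (Σ i : Fin n, Fin i.val) :=
    { toFun := fun p => ⟨p.1.1, ⟨p.1.2.val, p.2⟩⟩,
      invFun := fun q => ⟨(q.1, ⟨q.2.val, lt_trans q.2.isLt q.1.isLt⟩), q.2.isLt⟩,
      left_inv := fun p => by obtain ⟨⟨a,c⟩,h⟩ := p; rfl,
      right_inv := fun q => by obtain ⟨a, c⟩ := q; rfl }
  rw [Fintype.card_congr e, Fintype.card_sigma]
  simp only [Fintype.card_fin]
  rw [Fin.sum_univ_eq_sum_range (fun i => i) n]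
  have := Finset.sum_range_id_mul_two n
  omega

end B

/-- `L` is an abelian Lie ideal of `C(0)` of dimension `n(n-1)/2`:
`[L,L] = 0` and `[C(0),L] ⊆ L`; `L` is a ℂ-subspace of dimension `n(n-1)/2`; and `L` is
the kernel of the restriction to `C(0)` of the projection onto the component `b = 0`. -/
theorem statement10 (n : ℕ) [NeZero n] (hn : 2 ≤ n) :
    (∀ A ∈ Lset n, ∀ B ∈ Lset n,
        (fun b => A b * B b - B b * A b) = (0 : Fin n → Matrix (Fin n) (Fin n) ℂ)) ∧
    (∀ A ∈ Cset0 n, ∀ B ∈ Lset n, (fun b => A b * B b - B b * A b) ∈ Lset n) ∧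
    (∃ S : Submodule ℂ (Fin n → Matrix (Fin n) (Fin n) ℂ),
      (S : Set (Fin n → Matrix (Fin n) (Fin n) ℂ)) = Lset n ∧
      Module.finrank ℂ S = n * (n - 1) / 2) ∧
    Lset n = {A | A ∈ Cset0 n ∧ A 0 = 0} := by
  refine ⟨?_, ?_, ?_, ?_⟩
  · -- abelian
    intro A hA B hB
    funext b
    have hAB : A b * B b = 0 := by
      ext i k
      rw [Matrix.mul_apply]
      refine Finset.sum_eq_zero (fun j _ => ?_)
      by_cases hz : A b i j = 0
      · simp [hz]
      · have h1 : j.val < b.val ∧ b.val ≤ i.val := by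
          by_contra hc; exact hz (Lzero hA b i j hc)
        rw [Lzero hB b j k (by omega), mul_zero]
    have hBA : B b * A b = 0 := by
      ext i k
      rw [Matrix.mul_apply]
      refine Finset.sum_eq_zero (fun j _ => ?_)
      by_cases hz : B b i j = 0
      · simp [hz]
      · have h1 : j.val < b.val ∧ b.val ≤ i.val := by
          by_contra hc; exact hz (Lzero hB b i j hc)
        rw [Lzero hA b j k (by omega), mul_zero]
    simp [hAB, hBA]
  · -- ideal
    intro A hA B hB
    refine ⟨fun b => ?_, fun b i k hik => ?_⟩
    · show (A (b+1) * B (b+1) - B (b+1) * A (b+1)) * Dmat0 n b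
          = Dmat0 n b * (A b * B b - B b * A b)
      rw [sub_mul, mul_sub]
      congr 1
      · rw [mul_assoc, hB.1 b, ← mul_assoc, hA b, mul_assoc]
      · rw [mul_assoc, hA b, ← mul_assoc, hB.1 b, mul_assoc]
    · rw [Fin.le_def] at hik
      have hin := i.isLt; have hkn := k.isLt; have hbn := b.isLt
      have s1 : (A b * B b) i k = 0 := by
        rw [Matrix.mul_apply]
        refine Finset.sum_eq_zero (fun j _ => ?_)
        by_cases hz : B b j k = 0
        · simp [hz]
        · have h1 : k.val < b.val ∧ b.val ≤ j.val := by
            by_contra hc; exact hz (Lzero hB b j k hc)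
          rw [arcZero hA (i := i) (j := j) (Fin.ne_of_val_ne (by omega))
            (Or.inl ⟨by omega, by omega⟩), zero_mul]
      have s2 : (B b * A b) i k = 0 := by
        rw [Matrix.mul_apply]
        refine Finset.sum_eq_zero (fun j _ => ?_)
        by_cases hz : B b i j = 0
        · simp [hz]
        · have h1 : j.val < b.val ∧ b.val ≤ i.val := by
            by_contra hc; exact hz (Lzero hB b i j hc)
          rw [arcZero hA (i := j) (j := k) (Fin.ne_of_val_ne (by omega))
            (Or.inl ⟨by omega, by omega⟩), mul_zero]
      show (A b * B b - B b * A b) i k = 0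
      rw [Matrix.sub_apply, s1, s2, sub_zero]
  · -- dimension
    refine ⟨Lsub n, rfl, ?_⟩
    rw [LinearEquiv.finrank_eq (lowEquiv n), Module.finrank_fintype_fun_eq_card, card_low]
  · -- kernel of projection
    ext A
    constructor
    · intro hA
      refine ⟨hA.1, ?_⟩
      ext i j
      show A 0 i j = 0
      by_cases hij : i ≤ j
      · exact hA.2 0 i j hij
      · have hij' : j.val < i.val := by rw [Fin.le_def] at hij; omega
        exact arcZero hA.1 (Fin.ne_of_val_ne (by omega))
          (Or.inr ⟨hij', Or.inl (Nat.zero_le _)⟩)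
    · rintro ⟨hA1, hA2⟩
      refine ⟨hA1, fun b i j hij => ?_⟩
      rw [Fin.le_def] at hij
      have hin := i.isLt; have hjn := j.isLt; have hbn := b.isLt
      have h0 : (0 : Fin n).val = 0 := rfl
      by_cases hc1 : i.val < b.val ∧ b.val ≤ j.val
      · exact arcZero hA1 (Fin.ne_of_val_ne (by omega)) (Or.inl hc1)
      · rcases Nat.lt_or_ge j.val b.val with hbig | hsmall
        · -- b.val > j.val : connect b to 0 going forward
          have := const' hA1 i j b 0 (n - b.val)
            (by rw [show b.val + (n - b.val) = n by omega, Nat.mod_self]; exact h0.symm)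
            (fun m hm => by rw [Nat.mod_eq_of_lt (by omega)]; omega)
          rw [← this, hA2]
          rfl
        · -- b.val ≤ i.val : connect 0 to b
          have hble : b.val ≤ i.val := by omega
          have := const' hA1 i j 0 b b.val
            (by rw [h0, Nat.zero_add, Nat.mod_eq_of_lt hbn])
            (fun m hm => by rw [h0, Nat.zero_add, Nat.mod_eq_of_lt (by omega)]; omega)
          rw [this, hA2]
          rfl
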